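/- Let X be a discrete random variable and (Z_a)_{a∈E} a finite family of discrete random variables that are conditionally independent given X. Then the set function q(A) := I(X; Z_A) is submodular: for all A ⊆ B ⊆ E and a ∈ E \ B, I(X; Z_{B∪{a}}) - I(X; Z_B) ≤ I(X; Z_{A∪{a}}) - I(X; Z_A). -/

import Mathlib

open Finset Real

noncomputable section

/-- Pushforward pmf: the probability that the random variable `W` takes value `b`,
under the pmf `μ` on the finite sample space `Ω`. -/
def pf {Ω β : Type*} [Fintype Ω] [Fintype β] [DecidableEq β]
    (μ : Ω → ℝ) (W : Ω → β) (b : β) : ℝ :=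
  ∑ ω, if W ω = b then μ ω else 0

/-- Shannon entropy of the random variable `W` under the pmf `μ`
(natural log, convention `0 * log 0 = 0` since `Real.log 0 = 0`). -/
def ent {Ω β : Type*} [Fintype Ω] [Fintype β] [DecidableEq β]
    (μ : Ω → ℝ) (W : Ω → β) : ℝ :=
  -∑ b, pf μ W b * Real.log (pf μ W b)

/-- Mutual information `I(W;V) = H(W) - H(W|V) = H(W) + H(V) - H(W,V)`. -/
def mi {Ω β γ : Type*} [Fintype Ω] [Fintype β] [DecidableEq β]
    [Fintype γ] [DecidableEq γ] (μ : Ω → ℝ) (W : Ω → β) (V : Ω → γ) : ℝ :=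
  ent μ W + ent μ V - ent μ (fun ω => (W ω, V ω))

end

set_option linter.unusedSectionVars false

noncomputable section Aux
variable {Ω β γ : Type*} [Fintype Ω] [Fintype β] [DecidableEq β]
  [Fintype γ] [DecidableEq γ]

lemma pf_nonneg (μ : Ω → ℝ) (hμ0 : ∀ ω, 0 ≤ μ ω) (W : Ω → β) (b : β) :
    0 ≤ pf μ W b :=
  Finset.sum_nonneg fun ω _ => by split <;> simp [hμ0 ω]

lemma pf_comp (μ : Ω → ℝ) (W : Ω → β) (f : β → γ) (c : γ) :
    pf μ (fun ω => f (W ω)) c = ∑ b, if f b = c then pf μ W b else 0 := by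
  unfold pf
  have h : ∀ b, (if f b = c then ∑ ω, if W ω = b then μ ω else 0 else 0)
      = ∑ ω, if f b = c then (if W ω = b then μ ω else 0) else 0 := by
    intro b; split <;> simp
  simp only [h]
  rw [Finset.sum_comm]
  refine Finset.sum_congr rfl fun ω _ => ?_
  rw [Finset.sum_eq_single (W ω)]
  · simp
  · intro b _ hb; simp [Ne.symm hb]
  · simp

lemma sum_mul_pf_comp (μ : Ω → ℝ) (W : Ω → β) (f : β → γ) (F : γ → ℝ) :
    ∑ b, pf μ W b * F (f b) = ∑ c, pf μ (fun ω => f (W ω)) c * F c := by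
  simp only [pf_comp μ W f, Finset.sum_mul, ite_mul, zero_mul]
  rw [Finset.sum_comm]
  refine Finset.sum_congr rfl fun b _ => ?_
  rw [Finset.sum_eq_single (f b)]
  · simp
  · intro c _ hc; simp [Ne.symm hc]
  · simp

lemma pf_comp_inj (μ : Ω → ℝ) (W : Ω → β) {f : β → γ} (hf : Function.Injective f)
    (b : β) : pf μ (fun ω => f (W ω)) (f b) = pf μ W b := by
  rw [pf_comp]
  rw [Finset.sum_eq_single b]
  · simp
  · intro b' _ hb; simp [hf.eq_iff, hb]
  · simp

lemma ent_comp_inj (μ : Ω → ℝ) (W : Ω → β) {f : β → γ} (hf : Function.Injective f) :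
    ent μ (fun ω => f (W ω)) = ent μ W := by
  unfold ent
  congr 1
  rw [← sum_mul_pf_comp μ W f (fun c => Real.log (pf μ (fun ω => f (W ω)) c))]
  refine Finset.sum_congr rfl fun b _ => ?_
  rw [pf_comp_inj μ W hf]

lemma pf_marg_fst (μ : Ω → ℝ) (W : Ω → β) (V : Ω → γ) (b : β) :
    pf μ W b = ∑ c, pf μ (fun ω => (W ω, V ω)) (b, c) := by
  have h := pf_comp μ (fun ω => (W ω, V ω)) Prod.fst b
  simp only [Fintype.sum_prod_type] at h
  rw [show W = fun ω => Prod.fst (W ω, V ω) from rfl, h]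
  rw [Finset.sum_eq_single b]
  · simp
  · intro b' _ hb; simp [hb]
  · simp

end Aux

section SSA

lemma key_ineq {p q r s : ℝ} (hp : 0 ≤ p) (hq : p ≤ q) (hr : p ≤ r) (hs : p ≤ s) :
    p - q * r / s ≤ p * Real.log p + p * Real.log s - p * Real.log q - p * Real.log r := by
  have hq0 : 0 ≤ q := hp.trans hq
  have hr0 : 0 ≤ r := hp.trans hr
  have hs0 : 0 ≤ s := hp.trans hs
  rcases hp.eq_or_lt with h | h
  · rw [← h]
    simp only [zero_sub, zero_mul, sub_zero, add_zero, zero_add, neg_nonpos]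
    positivity
  · have hq' : 0 < q := h.trans_le hq
    have hr' : 0 < r := h.trans_le hr
    have hs' : 0 < s := h.trans_le hs
    have hlog : Real.log (q * r / (p * s)) ≤ q * r / (p * s) - 1 :=
      Real.log_le_sub_one_of_pos (by positivity)
    have h1 : Real.log (q * r / (p * s)) =
        Real.log q + Real.log r - Real.log p - Real.log s := by
      rw [Real.log_div (by positivity) (by positivity), Real.log_mul hq'.ne' hr'.ne',
        Real.log_mul h.ne' hs'.ne']
      ring
    rw [h1] at hlog
    have h2 : p * (Real.log q + Real.log r - Real.log p - Real.log s) ≤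
        p * (q * r / (p * s) - 1) := mul_le_mul_of_nonneg_left hlog hp
    have h3 : p * (q * r / (p * s) - 1) = q * r / s - p := by
      field_simp
    nlinarith [h2, h3]

lemma ssa_pmf {δ β γ : Type*} [Fintype δ] [Fintype β] [Fintype γ]
    (p : δ → β → γ → ℝ) (h0 : ∀ d b c, 0 ≤ p d b c) :
    (∑ b, ∑ c, (∑ d, p d b c) * Real.log (∑ d, p d b c)) +
      (∑ d, ∑ c, (∑ b, p d b c) * Real.log (∑ b, p d b c)) ≤
    (∑ d, ∑ b, ∑ c, p d b c * Real.log (p d b c)) +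
      (∑ c, (∑ d, ∑ b, p d b c) * Real.log (∑ d, ∑ b, p d b c)) := by
  set q : β → γ → ℝ := fun b c => ∑ d, p d b c with hqdef
  set r : δ → γ → ℝ := fun d c => ∑ b, p d b c with hrdef
  set s : γ → ℝ := fun c => ∑ d, ∑ b, p d b c with hsdef
  have hq0 : ∀ b c, 0 ≤ q b c := fun b c => Finset.sum_nonneg fun d _ => h0 d b c
  have hr0 : ∀ d c, 0 ≤ r d c := fun d c => Finset.sum_nonneg fun b _ => h0 d b c
  have hs0 : ∀ c, 0 ≤ s c := fun c =>
    Finset.sum_nonneg fun d _ => Finset.sum_nonneg fun b _ => h0 d b c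
  have hpq : ∀ d b c, p d b c ≤ q b c := fun d b c =>
    Finset.single_le_sum (f := fun d => p d b c) (fun d _ => h0 d b c) (Finset.mem_univ d)
  have hpr : ∀ d b c, p d b c ≤ r d c := fun d b c =>
    Finset.single_le_sum (f := fun b => p d b c) (fun b _ => h0 d b c) (Finset.mem_univ b)
  have hrs : ∀ d c, r d c ≤ s c := fun d c =>
    Finset.single_le_sum (f := fun d => r d c) (fun d _ => hr0 d c) (Finset.mem_univ d)
  have hps : ∀ d b c, p d b c ≤ s c := fun d b c => (hpr d b c).trans (hrs d c)
  have hsq : ∀ c, s c = ∑ b, q b c := fun c => Finset.sum_comm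
  -- rewrite all four entropy-type sums as triple sums in the order d, b, c
  have hC : (∑ b, ∑ c, q b c * Real.log (q b c)) =
      ∑ d, ∑ b, ∑ c, p d b c * Real.log (q b c) := by
    rw [Finset.sum_comm (s := Finset.univ) (t := Finset.univ)
      (f := fun d b => ∑ c, p d b c * Real.log (q b c))]
    refine Finset.sum_congr rfl fun b _ => ?_
    rw [Finset.sum_comm]
    refine Finset.sum_congr rfl fun c _ => ?_
    rw [hqdef, Finset.sum_mul]
  have hD : (∑ d, ∑ c, r d c * Real.log (r d c)) =
      ∑ d, ∑ b, ∑ c, p d b c * Real.log (r d c) := by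
    refine Finset.sum_congr rfl fun d _ => ?_
    rw [Finset.sum_comm]
    refine Finset.sum_congr rfl fun c _ => ?_
    rw [hrdef, Finset.sum_mul]
  have hB : (∑ c, s c * Real.log (s c)) =
      ∑ d, ∑ b, ∑ c, p d b c * Real.log (s c) := by
    rw [show (∑ d, ∑ b, ∑ c, p d b c * Real.log (s c)) =
        ∑ d, ∑ c, ∑ b, p d b c * Real.log (s c) from
      Finset.sum_congr rfl fun d _ => Finset.sum_comm]
    rw [Finset.sum_comm]
    refine Finset.sum_congr rfl fun c _ => ?_
    rw [hsdef, Finset.sum_mul]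
    exact Finset.sum_congr rfl fun d _ => Finset.sum_mul _ _ _
  rw [hC, hD, hB]
  -- reduce to a single triple-sum inequality
  rw [← sub_nonneg]
  have hsum : (∑ d, ∑ b, ∑ c, p d b c * Real.log (p d b c)) +
      (∑ d, ∑ b, ∑ c, p d b c * Real.log (s c)) -
      ((∑ d, ∑ b, ∑ c, p d b c * Real.log (q b c)) +
        (∑ d, ∑ b, ∑ c, p d b c * Real.log (r d c))) =
      ∑ d, ∑ b, ∑ c, (p d b c * Real.log (p d b c) + p d b c * Real.log (s c) -
        p d b c * Real.log (q b c) - p d b c * Real.log (r d c)) := by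
    simp only [Finset.sum_add_distrib, Finset.sum_sub_distrib]
    ring
  rw [hsum]
  have step1 : (∑ d, ∑ b, ∑ c, (p d b c - q b c * r d c / s c)) ≤
      ∑ d, ∑ b, ∑ c, (p d b c * Real.log (p d b c) + p d b c * Real.log (s c) -
        p d b c * Real.log (q b c) - p d b c * Real.log (r d c)) := by
    refine Finset.sum_le_sum fun d _ => Finset.sum_le_sum fun b _ =>
      Finset.sum_le_sum fun c _ => ?_
    exact key_ineq (h0 d b c) (hpq d b c) (hpr d b c) (hps d b c)
  refine le_trans ?_ step1
  simp only [Finset.sum_sub_distrib]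
  rw [sub_nonneg]
  -- ∑ q*r/s ≤ ∑ p
  have hleft : (∑ d, ∑ b, ∑ c, q b c * r d c / s c) =
      ∑ c, ∑ d, ∑ b, q b c * r d c / s c := by
    rw [show (∑ d, ∑ b, ∑ c, q b c * r d c / s c) =
        ∑ d, ∑ c, ∑ b, q b c * r d c / s c from
      Finset.sum_congr rfl fun d _ => Finset.sum_comm, Finset.sum_comm]
  have hright : (∑ d, ∑ b, ∑ c, p d b c) = ∑ c, s c := by
    rw [show (∑ d, ∑ b, ∑ c, p d b c) = ∑ d, ∑ c, ∑ b, p d b c from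
      Finset.sum_congr rfl fun d _ => Finset.sum_comm, Finset.sum_comm]
  rw [hleft, hright]
  refine Finset.sum_le_sum fun c _ => ?_
  rcases eq_or_ne (s c) 0 with h | h
  · have hq0' : ∀ b, q b c = 0 := by
      intro b
      have := (Finset.sum_eq_zero_iff_of_nonneg (fun b _ => hq0 b c)).mp ((hsq c).symm.trans h)
      exact this b (Finset.mem_univ b)
    simp [hq0', hs0 c]
  · have e1 : ∀ d, (∑ b, q b c * r d c / s c) = (∑ b, q b c) * (r d c / s c) := by
      intro d; rw [Finset.sum_mul]; simp [mul_div_assoc]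
    have : (∑ d, ∑ b, q b c * r d c / s c) = s c := by
      simp only [e1]
      rw [← Finset.mul_sum, ← Finset.sum_div, ← hsq c]
      have h2 : (∑ d, r d c) = s c := rfl
      rw [h2, div_self h, mul_one]
    rw [this]

end SSA

section SSAent
variable {Ω β γ δ : Type*} [Fintype Ω] [Fintype β] [DecidableEq β]
  [Fintype γ] [DecidableEq γ] [Fintype δ] [DecidableEq δ]

lemma ssa_ent (μ : Ω → ℝ) (hμ0 : ∀ ω, 0 ≤ μ ω) (U : Ω → δ) (W : Ω → β) (V : Ω → γ) :
    ent μ (fun ω => (U ω, (W ω, V ω))) + ent μ V ≤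
      ent μ (fun ω => (W ω, V ω)) + ent μ (fun ω => (U ω, V ω)) := by
  set T : Ω → δ × β × γ := fun ω => (U ω, (W ω, V ω)) with hT
  set p : δ → β → γ → ℝ := fun d b c => pf μ T (d, (b, c)) with hp
  have h0 : ∀ d b c, 0 ≤ p d b c := fun d b c => pf_nonneg μ hμ0 T _
  have hWV : ∀ b c, pf μ (fun ω => (W ω, V ω)) (b, c) = ∑ d, p d b c := by
    intro b c
    have h := pf_comp μ T (fun x => x.2) (b, c)
    rw [show (fun ω => (W ω, V ω)) = (fun ω => (T ω).2) from rfl, h]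
    simp only [Fintype.sum_prod_type, Prod.mk.injEq, ite_and]
    refine Finset.sum_congr rfl fun d _ => ?_
    simp [Finset.sum_ite_eq']
    rfl
  have hUV : ∀ d c, pf μ (fun ω => (U ω, V ω)) (d, c) = ∑ b, p d b c := by
    intro d c
    have h := pf_comp μ T (fun x => (x.1, x.2.2)) (d, c)
    rw [show (fun ω => (U ω, V ω)) = (fun ω => ((T ω).1, (T ω).2.2)) from rfl, h]
    simp only [Fintype.sum_prod_type, Prod.mk.injEq, ite_and]
    simp [Finset.sum_ite_eq']
    rfl
  have hV : ∀ c, pf μ V c = ∑ d, ∑ b, p d b c := by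
    intro c
    have h := pf_comp μ T (fun x => x.2.2) c
    rw [show V = (fun ω => (T ω).2.2) from rfl, h]
    simp only [Fintype.sum_prod_type]
    refine Finset.sum_congr rfl fun d _ => Finset.sum_congr rfl fun b _ => ?_
    simp [Finset.sum_ite_eq']
    rfl
  have key := ssa_pmf p h0
  have e1 : ent μ T = -∑ d, ∑ b, ∑ c, p d b c * Real.log (p d b c) := by
    unfold ent; simp only [Fintype.sum_prod_type]
    rfl
  have e2 : ent μ (fun ω => (W ω, V ω)) =
      -∑ b, ∑ c, (∑ d, p d b c) * Real.log (∑ d, p d b c) := by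
    unfold ent; simp only [Fintype.sum_prod_type]
    congr 1
    exact Finset.sum_congr rfl fun b _ => Finset.sum_congr rfl fun c _ => by rw [hWV]
  have e3 : ent μ (fun ω => (U ω, V ω)) =
      -∑ d, ∑ c, (∑ b, p d b c) * Real.log (∑ b, p d b c) := by
    unfold ent; simp only [Fintype.sum_prod_type]
    congr 1
    exact Finset.sum_congr rfl fun d _ => Finset.sum_congr rfl fun c _ => by rw [hUV]
  have e4 : ent μ V = -∑ c, (∑ d, ∑ b, p d b c) * Real.log (∑ d, ∑ b, p d b c) := by
    unfold ent
    congr 1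
    exact Finset.sum_congr rfl fun c _ => by rw [hV]
  rw [show ent μ (fun ω => (U ω, (W ω, V ω))) = ent μ T from rfl, e1, e2, e3, e4]
  linarith

end SSAent

section CI
variable {Ω E 𝒳 𝒵 : Type*} [Fintype Ω] [Fintype E] [DecidableEq E]
    [Fintype 𝒳] [DecidableEq 𝒳] [Fintype 𝒵] [DecidableEq 𝒵]

lemma sum_restrict_prod (S : Finset E) (g : E → 𝒵 → ℝ) (w : {e // e ∈ S} → 𝒵) :
    (∑ z : E → 𝒵, if (fun e : {e // e ∈ S} => z e.val) = w then ∏ e, g e (z e) else 0)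
      = (∏ e : {e // e ∈ S}, g e.val (w e)) * ∏ e : {e // e ∉ S}, (∑ v, g e.val v) := by
  classical
  rw [← (Equiv.piEquivPiSubtypeProd (fun e => e ∈ S) (fun _ => 𝒵)).symm.sum_comp]
  rw [Fintype.sum_prod_type]
  have hres : ∀ (u : {e // e ∈ S} → 𝒵) (vv : {e // e ∉ S} → 𝒵),
      (fun e : {e // e ∈ S} =>
        (Equiv.piEquivPiSubtypeProd (fun e => e ∈ S) (fun _ => 𝒵)).symm (u, vv) e.val) = u := by
    intro u vv
    funext e
    simp [Equiv.piEquivPiSubtypeProd_symm_apply, e.2]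
  have hsplit : ∀ f : E → ℝ, (∏ e, f e) =
      (∏ e : {e // e ∈ S}, f e.val) * ∏ e : {e // e ∉ S}, f e.val := by
    intro f
    rw [← Finset.prod_subtype S (fun x => Iff.rfl) f,
      ← Finset.prod_subtype Sᶜ (fun x => Finset.mem_compl) f,
      Finset.prod_mul_prod_compl]
  have hprod : ∀ (u : {e // e ∈ S} → 𝒵) (vv : {e // e ∉ S} → 𝒵),
      (∏ e, g e ((Equiv.piEquivPiSubtypeProd (fun e => e ∈ S) (fun _ => 𝒵)).symm (u, vv) e))
        = (∏ e : {e // e ∈ S}, g e.val (u e)) * ∏ e : {e // e ∉ S}, g e.val (vv e) := by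
    intro u vv
    rw [hsplit]
    congr 1
    · exact Finset.prod_congr rfl fun e _ => by
        simp [Equiv.piEquivPiSubtypeProd_symm_apply, e.2]
    · exact Finset.prod_congr rfl fun e _ => by
        simp [Equiv.piEquivPiSubtypeProd_symm_apply, e.2]
  calc (∑ u : {e // e ∈ S} → 𝒵, ∑ vv : {e // e ∉ S} → 𝒵,
        if (fun e : {e // e ∈ S} =>
          (Equiv.piEquivPiSubtypeProd (fun e => e ∈ S) (fun _ => 𝒵)).symm (u, vv) e.val) = w
        then ∏ e, g e ((Equiv.piEquivPiSubtypeProd (fun e => e ∈ S) (fun _ => 𝒵)).symm (u, vv) e)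
        else 0)
      = ∑ u : {e // e ∈ S} → 𝒵, ∑ vv : {e // e ∉ S} → 𝒵,
        if u = w then (∏ e : {e // e ∈ S}, g e.val (u e)) * ∏ e : {e // e ∉ S}, g e.val (vv e)
        else 0 := by
        refine Finset.sum_congr rfl fun u _ => Finset.sum_congr rfl fun vv _ => ?_
        rw [hres u vv, hprod u vv]
    _ = ∑ vv : {e // e ∉ S} → 𝒵,
          (∏ e : {e // e ∈ S}, g e.val (w e)) * ∏ e : {e // e ∉ S}, g e.val (vv e) := by
        rw [Finset.sum_comm]
        refine Finset.sum_congr rfl fun vv _ => ?_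
        rw [Finset.sum_eq_single w]
        · simp
        · intro u _ hu; simp [hu]
        · simp
    _ = (∏ e : {e // e ∈ S}, g e.val (w e)) * ∏ e : {e // e ∉ S}, (∑ v, g e.val v) := by
        rw [← Finset.mul_sum, Fintype.prod_sum (fun (e : {e // e ∉ S}) (v : 𝒵) => g e.val v)]

variable (μ : Ω → ℝ) (X : Ω → 𝒳) (Z : E → Ω → 𝒵)

lemma pf_subset_prod (hμ0 : ∀ ω, 0 ≤ μ ω)
    (hCI : ∀ (x : 𝒳) (z : E → 𝒵), pf μ X x ≠ 0 →
      pf μ (fun ω => (X ω, fun e : E => Z e ω)) (x, z) / pf μ X x =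
      ∏ e : E, pf μ (fun ω => (X ω, Z e ω)) (x, z e) / pf μ X x)
    (S : Finset E) (x : 𝒳) (w : {e // e ∈ S} → 𝒵) :
    pf μ (fun ω => (X ω, fun e : {e // e ∈ S} => Z e ω)) (x, w) =
      pf μ X x * ∏ e : {e // e ∈ S},
        (pf μ (fun ω => (X ω, Z e.val ω)) (x, w e) / pf μ X x) := by
  classical
  set p : 𝒳 → ℝ := pf μ X with hpdef
  set P : 𝒳 × (E → 𝒵) → ℝ := pf μ (fun ω => (X ω, fun e : E => Z e ω)) with hPdef
  have hmarg : ∀ x', (∑ z : E → 𝒵, P (x', z)) = p x' := fun x' =>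
    (pf_marg_fst μ X (fun ω => fun e : E => Z e ω) x').symm
  have hP0 : ∀ y, 0 ≤ P y := fun y => pf_nonneg μ hμ0 _ y
  have hdom : ∀ x' z, P (x', z) ≤ p x' := fun x' z => by
    rw [← hmarg x']
    exact Finset.single_le_sum (f := fun z => P (x', z)) (fun z _ => hP0 _) (Finset.mem_univ z)
  have hprodP : ∀ x' z, P (x', z) =
      p x' * ∏ e : E, (pf μ (fun ω => (X ω, Z e ω)) (x', z e) / p x') := by
    intro x' z
    by_cases hx : p x' = 0
    · rw [hx, zero_mul]
      exact le_antisymm (by rw [← hx]; exact hdom x' z) (hP0 _)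
    · rw [← hCI x' z hx]
      field_simp
  -- express the subset pushforward as a sum over full configurations
  have hcomp := pf_comp μ (fun ω => (X ω, fun e : E => Z e ω))
    (fun y : 𝒳 × (E → 𝒵) => (y.1, fun e : {e // e ∈ S} => y.2 e.val)) (x, w)
  rw [show (fun ω => (X ω, fun e : {e // e ∈ S} => Z e.val ω)) =
    (fun ω => ((fun y : 𝒳 × (E → 𝒵) => (y.1, fun e : {e // e ∈ S} => y.2 e.val))
      ((X ω, fun e : E => Z e ω)))) from rfl, hcomp]
  rw [Fintype.sum_prod_type]
  simp only [Prod.mk.injEq, ite_and]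
  rw [Finset.sum_eq_single x]
  · simp only [eq_self_iff_true, if_true]
    by_cases hx : p x = 0
    · rw [hx, zero_mul]
      refine Finset.sum_eq_zero fun z _ => ?_
      have h0' : P (x, z) = 0 :=
        le_antisymm (by rw [← hx]; exact hdom x z) (hP0 _)
      simp only [ite_eq_right_iff]
      intro _
      exact h0'
    · have : ∀ z : E → 𝒵,
          (if (fun e : {e // e ∈ S} => z e.val) = w then P (x, z) else 0) =
          p x * (if (fun e : {e // e ∈ S} => z e.val) = w
            then ∏ e : E, (pf μ (fun ω => (X ω, Z e ω)) (x, z e) / p x) else 0) := by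
        intro z
        split
        · rw [hprodP x z]
        · simp
      rw [show (∑ z : E → 𝒵, if (fun e : {e // e ∈ S} => z e.val) = w then P (x, z) else 0) =
          p x * ∑ z : E → 𝒵, (if (fun e : {e // e ∈ S} => z e.val) = w
            then ∏ e : E, (pf μ (fun ω => (X ω, Z e ω)) (x, z e) / p x) else 0) by
        rw [Finset.mul_sum]; exact Finset.sum_congr rfl fun z _ => this z]
      rw [sum_restrict_prod S (fun e v => pf μ (fun ω => (X ω, Z e ω)) (x, v) / p x) w]
      have hone : ∀ e : {e // e ∉ S}, (∑ v, pf μ (fun ω => (X ω, Z e.val ω)) (x, v) / p x) = 1 := by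
        intro e
        rw [← Finset.sum_div, ← pf_marg_fst μ X (Z e.val) x, div_self hx]
      rw [show (∏ e : {e // e ∉ S}, ∑ v, pf μ (fun ω => (X ω, Z e.val ω)) (x, v) / p x) = 1 from
        Finset.prod_eq_one fun e _ => hone e]
      ring
  · intro x' _ hx'
    refine Finset.sum_eq_zero fun z _ => ?_
    simp [hx']
  · simp

end CI

section CIent
variable {Ω E 𝒳 𝒵 : Type*} [Fintype Ω] [Fintype E] [DecidableEq E]
    [Fintype 𝒳] [DecidableEq 𝒳] [Fintype 𝒵] [DecidableEq 𝒵]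

lemma ci_ent (μ : Ω → ℝ) (X : Ω → 𝒳) (Z : E → Ω → 𝒵) (hμ0 : ∀ ω, 0 ≤ μ ω)
    (hCI : ∀ (x : 𝒳) (z : E → 𝒵), pf μ X x ≠ 0 →
      pf μ (fun ω => (X ω, fun e : E => Z e ω)) (x, z) / pf μ X x =
      ∏ e : E, pf μ (fun ω => (X ω, Z e ω)) (x, z e) / pf μ X x)
    (S : Finset E) :
    ent μ (fun ω => (X ω, fun e : {e // e ∈ S} => Z e ω)) =
      ent μ X + ∑ e ∈ S, (ent μ (fun ω => (X ω, Z e ω)) - ent μ X) := by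
  classical
  set p : 𝒳 → ℝ := pf μ X with hpdef
  set W : Ω → 𝒳 × ({e // e ∈ S} → 𝒵) := fun ω => (X ω, fun e : {e // e ∈ S} => Z e ω) with hW
  set PS : 𝒳 × ({e // e ∈ S} → 𝒵) → ℝ := pf μ W with hPSdef
  set pe : E → 𝒳 × 𝒵 → ℝ := fun e => pf μ (fun ω => (X ω, Z e ω)) with hpe
  have hPS : ∀ y : 𝒳 × ({e // e ∈ S} → 𝒵),
      PS y = p y.1 * ∏ e : {e // e ∈ S}, (pe e.val (y.1, y.2 e) / p y.1) := fun y =>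
    pf_subset_prod μ X Z hμ0 hCI S y.1 y.2
  have hterm : ∀ y, PS y * Real.log (PS y) =
      PS y * Real.log (p y.1) + ∑ e : {e // e ∈ S},
        (PS y * Real.log (pe e.val (y.1, y.2 e)) - PS y * Real.log (p y.1)) := by
    intro y
    by_cases h : PS y = 0
    · simp [h]
    · have hp0 : p y.1 ≠ 0 := fun h0 => h (by rw [hPS y, h0, zero_mul])
      have hfac : ∀ e : {e // e ∈ S}, pe e.val (y.1, y.2 e) / p y.1 ≠ 0 := by
        intro e h0
        exact h (by rw [hPS y, Finset.prod_eq_zero (Finset.mem_univ e) h0, mul_zero])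
      have hpez : ∀ e : {e // e ∈ S}, pe e.val (y.1, y.2 e) ≠ 0 := by
        intro e h0
        exact hfac e (by rw [h0, zero_div])
      have hlog : Real.log (PS y) = Real.log (p y.1) +
          ∑ e : {e // e ∈ S}, (Real.log (pe e.val (y.1, y.2 e)) - Real.log (p y.1)) := by
        rw [hPS y, Real.log_mul hp0 (Finset.prod_ne_zero_iff.mpr fun e _ => hfac e),
          Real.log_prod (fun e _ => hfac e)]
        congr 1
        exact Finset.sum_congr rfl fun e _ => Real.log_div (hpez e) hp0
      rw [hlog, mul_add, Finset.mul_sum]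
      congr 1
      exact Finset.sum_congr rfl fun e _ => by ring
  have hA : (∑ y, PS y * Real.log (p y.1)) = ∑ x, p x * Real.log (p x) :=
    sum_mul_pf_comp μ W Prod.fst (fun x => Real.log (p x))
  have hBe : ∀ e : {e // e ∈ S},
      (∑ y, PS y * Real.log (pe e.val (y.1, y.2 e))) =
        ∑ c, pe e.val c * Real.log (pe e.val c) := fun e =>
    sum_mul_pf_comp μ W (fun y => (y.1, y.2 e)) (fun c => Real.log (pe e.val c))
  have main : ent μ W = ent μ X + ∑ e : {e // e ∈ S},
      (ent μ (fun ω => (X ω, Z e.val ω)) - ent μ X) := by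
    unfold ent
    rw [show (∑ b, PS b * Real.log (PS b)) =
        (∑ y, PS y * Real.log (p y.1)) + ∑ e : {e // e ∈ S},
          ((∑ y, PS y * Real.log (pe e.val (y.1, y.2 e))) -
            ∑ y, PS y * Real.log (p y.1)) from ?_]
    · rw [hA]
      simp only [hBe]
      simp only [hpe, hpdef]
      simp only [Finset.sum_sub_distrib, Finset.sum_add_distrib, Finset.sum_neg_distrib,
        Finset.sum_const, nsmul_eq_mul]
      ring
    · rw [show (∑ b, PS b * Real.log (PS b)) =
          ∑ y, (PS y * Real.log (p y.1) + ∑ e : {e // e ∈ S},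
            (PS y * Real.log (pe e.val (y.1, y.2 e)) - PS y * Real.log (p y.1))) from
        Finset.sum_congr rfl fun y _ => hterm y]
      rw [Finset.sum_add_distrib]
      congr 1
      rw [Finset.sum_comm]
      exact Finset.sum_congr rfl fun e _ => by rw [Finset.sum_sub_distrib]
  rw [main]
  congr 1
  exact Finset.sum_coe_sort S (fun e => ent μ (fun ω => (X ω, Z e ω)) - ent μ X)

end CIent

section Final
variable {Ω E 𝒳 𝒵 : Type*} [Fintype Ω] [Fintype E] [DecidableEq E]
    [Fintype 𝒳] [DecidableEq 𝒳] [Fintype 𝒵] [DecidableEq 𝒵]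

lemma ent_restr_insert (μ : Ω → ℝ) (Z : E → Ω → 𝒵) (a : E) (S : Finset E) (ha : a ∉ S) :
    ent μ (fun ω => fun e : {e // e ∈ insert a S} => Z e ω)
      = ent μ (fun ω => (Z a ω, fun e : {e // e ∈ S} => Z e ω)) := by
  classical
  set f : 𝒵 × ({e // e ∈ S} → 𝒵) → ({e // e ∈ insert a S} → 𝒵) :=
    fun y => fun e => if hs : e.val ∈ S then y.2 ⟨e.val, hs⟩ else y.1 with hf
  have hinj : Function.Injective f := by
    rintro ⟨v, h⟩ ⟨v', h'⟩ heq
    have h1 : v = v' := by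
      have := congrFun heq ⟨a, Finset.mem_insert_self a S⟩
      simpa [hf, ha] using this
    have h2 : h = h' := by
      funext e
      have := congrFun heq ⟨e.val, Finset.mem_insert_of_mem e.2⟩
      simpa [hf, e.2] using this
    simp [h1, h2]
  have hcomp : (fun ω => fun e : {e // e ∈ insert a S} => Z e ω)
      = fun ω => f (Z a ω, fun e : {e // e ∈ S} => Z e ω) := by
    funext ω e
    simp only [hf]
    split
    · rfl
    · next hs =>
      rcases Finset.mem_insert.mp e.2 with h | h
      · rw [h]
      · exact absurd h hs
  rw [hcomp, ent_comp_inj μ _ hinj]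

lemma union_combine_injective (S T : Finset E) (hST : Disjoint S T) :
    Function.Injective (fun (y : ({e // e ∈ S} → 𝒵) × ({e // e ∈ T} → 𝒵)) =>
      (fun e : {e // e ∈ S ∪ T} => if hs : e.val ∈ S then y.1 ⟨e.val, hs⟩
        else y.2 ⟨e.val, (Finset.mem_union.mp e.2).resolve_left hs⟩)) := by
  rintro ⟨h, k⟩ ⟨h', k'⟩ heq
  have h1 : h = h' := by
    funext e
    have := congrFun heq ⟨e.val, Finset.mem_union_left T e.2⟩
    simpa [e.2] using this
  have h2 : k = k' := by
    funext e
    have hnotS : e.val ∉ S := Finset.disjoint_right.mp hST e.2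
    have := congrFun heq ⟨e.val, Finset.mem_union_right S e.2⟩
    simpa [hnotS] using this
  simp [h1, h2]

lemma restr_union_eq (Z : E → Ω → 𝒵) (S T : Finset E) (hST : Disjoint S T) :
    (fun ω => fun e : {e // e ∈ S ∪ T} => Z e ω)
      = fun ω => (fun (y : ({e // e ∈ S} → 𝒵) × ({e // e ∈ T} → 𝒵)) =>
          (fun e : {e // e ∈ S ∪ T} => if hs : e.val ∈ S then y.1 ⟨e.val, hs⟩
            else y.2 ⟨e.val, (Finset.mem_union.mp e.2).resolve_left hs⟩))
        ((fun e : {e // e ∈ S} => Z e ω), (fun e : {e // e ∈ T} => Z e ω)) := by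
  funext ω e
  dsimp only
  split <;> rfl

lemma ent_restr_union (μ : Ω → ℝ) (Z : E → Ω → 𝒵) (S T : Finset E) (hST : Disjoint S T) :
    ent μ (fun ω => fun e : {e // e ∈ S ∪ T} => Z e ω)
      = ent μ (fun ω => ((fun e : {e // e ∈ S} => Z e ω), (fun e : {e // e ∈ T} => Z e ω))) := by
  rw [restr_union_eq Z S T hST, ent_comp_inj μ _ (union_combine_injective S T hST)]

lemma ent_pair_restr_union (μ : Ω → ℝ) (Y : Ω → 𝒵) (Z : E → Ω → 𝒵) (S T : Finset E)
    (hST : Disjoint S T) :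
    ent μ (fun ω => (Y ω, fun e : {e // e ∈ S ∪ T} => Z e ω))
      = ent μ (fun ω => (Y ω,
          ((fun e : {e // e ∈ S} => Z e ω), (fun e : {e // e ∈ T} => Z e ω)))) := by
  have hinj : Function.Injective (Prod.map (id : 𝒵 → 𝒵)
      (fun (y : ({e // e ∈ S} → 𝒵) × ({e // e ∈ T} → 𝒵)) =>
        (fun e : {e // e ∈ S ∪ T} => if hs : e.val ∈ S then y.1 ⟨e.val, hs⟩
          else y.2 ⟨e.val, (Finset.mem_union.mp e.2).resolve_left hs⟩))) :=
    Function.Injective.prodMap Function.injective_id (union_combine_injective S T hST)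
  have hcomp : (fun ω => (Y ω, fun e : {e // e ∈ S ∪ T} => Z e ω))
      = fun ω => (Prod.map (id : 𝒵 → 𝒵)
          (fun (y : ({e // e ∈ S} → 𝒵) × ({e // e ∈ T} → 𝒵)) =>
            (fun e : {e // e ∈ S ∪ T} => if hs : e.val ∈ S then y.1 ⟨e.val, hs⟩
              else y.2 ⟨e.val, (Finset.mem_union.mp e.2).resolve_left hs⟩)))
          (Y ω, ((fun e : {e // e ∈ S} => Z e ω), (fun e : {e // e ∈ T} => Z e ω))) := by
    funext ω
    refine Prod.ext rfl ?_
    funext e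
    dsimp only [Prod.map]
    split <;> rfl
  rw [hcomp, ent_comp_inj μ _ hinj]

end Final


set_option maxHeartbeats 1000000 in
/-- Submodularity of mutual information under conditional independence:
if the variables `(Z_e)_{e ∈ E}` are conditionally independent given `X`
(the joint conditional pmf factorizes), then `A ↦ I(X; Z_A)` is submodular:
for `A ⊆ B` and `a ∉ B`,
`I(X; Z_{B∪{a}}) - I(X; Z_B) ≤ I(X; Z_{A∪{a}}) - I(X; Z_A)`. -/
theorem stmt2 {Ω E 𝒳 𝒵 : Type*} [Fintype Ω] [Fintype E] [DecidableEq E]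
    [Fintype 𝒳] [DecidableEq 𝒳] [Fintype 𝒵] [DecidableEq 𝒵]
    (μ : Ω → ℝ) (hμ0 : ∀ ω, 0 ≤ μ ω) (hμ1 : ∑ ω, μ ω = 1)
    (X : Ω → 𝒳) (Z : E → Ω → 𝒵)
    (hCI : ∀ (x : 𝒳) (z : E → 𝒵), pf μ X x ≠ 0 →
      pf μ (fun ω => (X ω, fun e : E => Z e ω)) (x, z) / pf μ X x =
      ∏ e : E, pf μ (fun ω => (X ω, Z e ω)) (x, z e) / pf μ X x)
    (A B : Finset E) (hAB : A ⊆ B) (a : E) (ha : a ∉ B) :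
    mi μ X (fun ω => fun e : {e // e ∈ insert a B} => Z e ω) -
      mi μ X (fun ω => fun e : {e // e ∈ B} => Z e ω) ≤
    mi μ X (fun ω => fun e : {e // e ∈ insert a A} => Z e ω) -
      mi μ X (fun ω => fun e : {e // e ∈ A} => Z e ω) := by
  classical
  have haA : a ∉ A := fun h => ha (hAB h)
  have hBU : B \ A ∪ A = B := Finset.sdiff_union_of_subset hAB
  have hdisj : Disjoint (B \ A) A := Finset.sdiff_disjoint
  -- the conditional-independence identities
  have hA' := ci_ent μ X Z hμ0 hCI A
  have hB' := ci_ent μ X Z hμ0 hCI B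
  have haA' := ci_ent μ X Z hμ0 hCI (insert a A)
  have haB' := ci_ent μ X Z hμ0 hCI (insert a B)
  rw [Finset.sum_insert haA] at haA'
  rw [Finset.sum_insert ha] at haB'
  -- entropy identifications
  have i3 : ent μ (fun ω => fun e : {e // e ∈ insert a A} => Z e ω)
      = ent μ (fun ω => (Z a ω, fun e : {e // e ∈ A} => Z e ω)) :=
    ent_restr_insert μ Z a A haA
  have i2 := ent_restr_union μ Z (B \ A) A hdisj
  rw [hBU] at i2
  have i1 := ent_pair_restr_union μ (Z a) Z (B \ A) A hdisj
  rw [hBU] at i1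

  have hssa := ssa_ent μ hμ0 (Z a) (fun ω => fun e : {e // e ∈ B \ A} => Z e ω)
    (fun ω => fun e : {e // e ∈ A} => Z e ω)
  beta_reduce at hssa
  simp only [mi]
  rw [hA', hB', haA', haB']
  rw [ent_restr_insert μ Z a B ha, ent_restr_insert μ Z a A haA, i1, i2]
  linarith
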